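/- A bipartite graph G is doubly chordal bipartite (every cycle of length ≥ 6 has at least two chords) if and only if G is chordal bipartite (every cycle of length ≥ 6 has a chord) and G has no induced subgraph isomorphic to the double-square graph, i.e., the 6-cycle with exactly one chord. -/

import Mathlib

open Finset

open scoped Classical

/-- The bipartite graph associated to `S ⊆ [m] × [n]`. -/
def qiGraph (m n : ℕ) (S : Finset (Fin m × Fin n)) : SimpleGraph (Fin m ⊕ Fin n) :=
  SimpleGraph.fromRel (fun a b =>
    ∃ p : Fin m × Fin n, p ∈ S ∧ a = Sum.inl p.1 ∧ b = Sum.inr p.2)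

/-- A chord of a closed walk: an edge of `G` between vertices of the walk that is not
an edge of the walk. -/
def IsChord {V : Type*} (G : SimpleGraph V) {v : V} (c : G.Walk v v) (e : Sym2 V) : Prop :=
  e ∈ G.edgeSet ∧ e ∉ c.edges ∧ ∀ x ∈ e, x ∈ c.support

/-- Every cycle of length at least 6 has at least one chord. -/
def ChordalBipartite {V : Type*} (G : SimpleGraph V) : Prop :=
  ∀ (v : V) (c : G.Walk v v), c.IsCycle → 6 ≤ c.length → ∃ e : Sym2 V, IsChord G c e

/-- Every cycle of length at least 6 has at least two chords. -/
def DoublyChordalBipartite {V : Type*} (G : SimpleGraph V) : Prop :=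
  ∀ (v : V) (c : G.Walk v v), c.IsCycle → 6 ≤ c.length →
    ∃ e₁ e₂ : Sym2 V, e₁ ≠ e₂ ∧ IsChord G c e₁ ∧ IsChord G c e₂

variable {m n : ℕ}

/-- A (nonempty) clique in `S`: a subset of `S` of the form `R × T`. -/
def IsGridClique (S C : Finset (Fin m × Fin n)) : Prop :=
  C.Nonempty ∧ C ⊆ S ∧ ∀ p ∈ C, ∀ q ∈ C, (p.1, q.2) ∈ C

/-- A maximal clique in `S`. -/
def IsMaxClique (S C : Finset (Fin m × Fin n)) : Prop :=
  IsGridClique S C ∧ ∀ C', IsGridClique S C' → C ⊆ C' → C = C'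

/-- `Max(S)`: the set of maximal cliques of `S`. -/
noncomputable def maxCliques (S : Finset (Fin m × Fin n)) : Finset (Finset (Fin m × Fin n)) :=
  S.powerset.filter (IsMaxClique S)

/-- `Max(x)`: maximal cliques containing the index `x`. -/
noncomputable def maxCliquesAt (S : Finset (Fin m × Fin n)) (x : Fin m × Fin n) :
    Finset (Finset (Fin m × Fin n)) :=
  (maxCliques S).filter (fun D => x ∈ D)

/-- Pairwise intersections of distinct maximal cliques of `S`. -/
noncomputable def pairInts (S : Finset (Fin m × Fin n)) : Finset (Finset (Fin m × Fin n)) :=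
  ((maxCliques S ×ˢ maxCliques S).filter (fun P => P.1 ≠ P.2)).image (fun P => P.1 ∩ P.2)

/-- `Int(S)`: containment-maximal pairwise intersections of maximal cliques of `S`. -/
noncomputable def maxInts (S : Finset (Fin m × Fin n)) : Finset (Finset (Fin m × Fin n)) :=
  (pairInts S).filter (fun C => ∀ C' ∈ pairInts S, C ⊆ C' → C = C')

/-- Pairwise intersections of distinct elements of `Max(x)`. -/
noncomputable def pairIntsAt (S : Finset (Fin m × Fin n)) (x : Fin m × Fin n) :
    Finset (Finset (Fin m × Fin n)) :=
  ((maxCliquesAt S x ×ˢ maxCliquesAt S x).filter (fun P => P.1 ≠ P.2)).image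
    (fun P => P.1 ∩ P.2)

/-- `Int(x)`: containment-maximal pairwise intersections of elements of `Max(x)`. -/
noncomputable def maxIntsAt (S : Finset (Fin m × Fin n)) (x : Fin m × Fin n) :
    Finset (Finset (Fin m × Fin n)) :=
  (pairIntsAt S x).filter (fun C => ∀ C' ∈ pairIntsAt S x, C ⊆ C' → C = C')

/-- The rows of column `j` that are also nonzero rows of column `j₀`. -/
noncomputable def colRows (S : Finset (Fin m × Fin n)) (j₀ j : Fin n) : Finset (Fin m) :=
  Finset.univ.filter (fun i => (i, j) ∈ S ∧ (i, j₀) ∈ S)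

/-- The clique induced by the block (w.r.t. column `j₀`) of the column `j`. -/
noncomputable def inducedClique (S : Finset (Fin m × Fin n)) (j₀ j : Fin n) :
    Finset (Fin m × Fin n) :=
  Finset.univ.filter (fun p => p.1 ∈ colRows S j₀ j ∧ colRows S j₀ j ⊆ colRows S j₀ p.2)

/-- The row indices of a subset of `S`. -/
noncomputable def rowsOf (D : Finset (Fin m × Fin n)) : Finset (Fin m) := D.image Prod.fst

/-- An element of the poset `P(j₀)`: a maximal clique of `S` meeting column `j₀`. -/
def PNode (S : Finset (Fin m × Fin n)) (j₀ : Fin n) (D : Finset (Fin m × Fin n)) : Prop :=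
  IsMaxClique S D ∧ ∃ i, (i, j₀) ∈ D

/-- `PCovers S j₀ Dβ Dα` means `Dα ⋖ Dβ` in the poset `P(j₀)` (ordered by
containment of row sets). -/
def PCovers (S : Finset (Fin m × Fin n)) (j₀ : Fin n) (Dβ Dα : Finset (Fin m × Fin n)) : Prop :=
  PNode S j₀ Dα ∧ PNode S j₀ Dβ ∧ rowsOf Dα ⊂ rowsOf Dβ ∧
    ¬ ∃ Dγ, PNode S j₀ Dγ ∧ rowsOf Dα ⊂ rowsOf Dγ ∧ rowsOf Dγ ⊂ rowsOf Dβ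

/-- `C⁺`: the sum of the entries of `u` indexed by `C`. -/
def cliqueSum (u : Fin m × Fin n → ℝ) (C : Finset (Fin m × Fin n)) : ℝ := ∑ x ∈ C, u x

/-- `u_{i+}`: the `i`-th row marginal of `u` over `S`. -/
noncomputable def rowMarg (S : Finset (Fin m × Fin n)) (u : Fin m × Fin n → ℝ) (i : Fin m) : ℝ :=
  ∑ x ∈ S.filter (fun x => x.1 = i), u x

/-- `u_{+j}`: the `j`-th column marginal of `u` over `S`. -/
noncomputable def colMarg (S : Finset (Fin m × Fin n)) (u : Fin m × Fin n → ℝ) (j : Fin n) : ℝ :=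
  ∑ x ∈ S.filter (fun x => x.2 = j), u x

/-- `u_{++}`: the total sum of `u` over `S`. -/
def totalSum (S : Finset (Fin m × Fin n)) (u : Fin m × Fin n → ℝ) : ℝ := ∑ x ∈ S, u x

/-- The double-square pattern: a 6-cycle with exactly one chord. -/
def dsPattern : Finset (Fin 3 × Fin 3) :=
  {(0, 0), (0, 1), (1, 0), (1, 1), (1, 2), (2, 1), (2, 2)}

/-- The double-square graph. -/
def doubleSquareGraph : SimpleGraph (Fin 3 ⊕ Fin 3) := qiGraph 3 3 dsPattern


section DCBAux

open SimpleGraph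

instance : DecidableRel doubleSquareGraph.Adj := fun x y =>
  decidable_of_iff (x ≠ y ∧ ((∃ p, p ∈ dsPattern ∧ x = Sum.inl p.1 ∧ y = Sum.inr p.2) ∨
      (∃ p, p ∈ dsPattern ∧ y = Sum.inl p.1 ∧ x = Sum.inr p.2)))
    (by rw [doubleSquareGraph, qiGraph, SimpleGraph.fromRel_adj])

variable {U : Type*} {G : SimpleGraph U}

lemma even_closed_walk (hbip : G.Colorable 2) {v : U} (c : G.Walk v v) : Even c.length := by
  obtain ⟨C⟩ := hbip
  have key : ∀ x y : Fin 2, x ≠ y → decide (x = 0) ≠ decide (y = 0) := by decide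
  let C' : G.Coloring Bool := SimpleGraph.Coloring.mk (fun x => decide (C x = 0))
    (fun {a b} h => key _ _ (C.valid h))
  exact (SimpleGraph.Coloring.even_length_iff_congr C' c).mpr Iff.rfl

lemma support_inter {a b : U} (p : G.Walk a b) (q : G.Walk b a)
    (hnd : (p.support.tail ++ q.support.tail).Nodup) :
    ∀ x, x ∈ p.support → x ∈ q.support → x = a ∨ x = b := by
  intro x hxp hxq
  rw [SimpleGraph.Walk.mem_support_iff] at hxp hxq
  rcases hxp with rfl | hxp
  · exact Or.inl rfl
  rcases hxq with rfl | hxq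
  · exact Or.inr rfl
  exact absurd hxq (List.disjoint_of_nodup_append hnd hxp)

lemma end_mem_tail_support_closed {v : U} (c : G.Walk v v) (h : c.length ≠ 0) :
    v ∈ c.support.tail := by
  cases c with
  | nil => simp at h
  | cons h p => simpa using p.end_mem_support

lemma walk_len3 {u w : U} (p : G.Walk u w) (h : p.length = 3) :
    ∃ (x y : U) (h1 : G.Adj u x) (h2 : G.Adj x y) (h3 : G.Adj y w),
      p = SimpleGraph.Walk.cons h1 (SimpleGraph.Walk.cons h2
          (SimpleGraph.Walk.cons h3 SimpleGraph.Walk.nil)) := by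
  cases p with
  | nil => simp at h
  | cons h1 p =>
    cases p with
    | nil => simp at h
    | cons h2 p =>
      cases p with
      | nil => simp at h
      | cons h3 p =>
        cases p with
        | nil => exact ⟨_, _, h1, h2, h3, rfl⟩
        | cons h4 p =>
          simp only [SimpleGraph.Walk.length_cons] at h
          omega

lemma chord_of_subcycle {v a b : U} {c : G.Walk v v}
    (hadj : G.Adj a b) (q : G.Walk b a) (p : G.Walk a b)
    (hsplit : ∀ e ∈ c.edges, e ∈ p.edges ∨ e ∈ q.edges)
    (hqs : ∀ z ∈ q.support, z ∈ c.support)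
    (ha : a ∈ c.support)
    (hint : ∀ z, z ∈ p.support → z ∈ q.support → z = a ∨ z = b)
    (henot : s(a, b) ∉ c.edges)
    {x y : U} (h₁ : IsChord G (SimpleGraph.Walk.cons hadj q) s(x, y)) :
    IsChord G c s(x, y) ∧ s(x, y) ≠ s(a, b) := by
  obtain ⟨heG, hee, hes⟩ := h₁
  have hxy : G.Adj x y := heG
  have hxs : x = a ∨ x ∈ q.support := by
    have := hes x (by simp)
    rwa [Walk.support_cons, List.mem_cons] at this
  have hys : y = a ∨ y ∈ q.support := by
    have := hes y (by simp)
    rwa [Walk.support_cons, List.mem_cons] at this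
  have hne : s(x, y) ≠ s(a, b) := by
    intro h
    exact hee (by rw [Walk.edges_cons, h]; exact List.mem_cons_self)
  refine ⟨⟨heG, ?_, ?_⟩, hne⟩
  · intro hmem
    rcases hsplit _ hmem with hp | hq
    · have hxp : x ∈ p.support := Walk.fst_mem_support_of_mem_edges p hp
      have hyp : y ∈ p.support := Walk.snd_mem_support_of_mem_edges p hp
      have hxab : x = a ∨ x = b := by
        rcases hxs with rfl | hxq
        · exact Or.inl rfl
        · exact hint x hxp hxq
      have hyab : y = a ∨ y = b := by
        rcases hys with rfl | hyq
        · exact Or.inl rfl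
        · exact hint y hyp hyq
      have hEq : s(x, y) = s(a, b) := by
        rcases hxab with rfl | rfl <;> rcases hyab with rfl | rfl
        · exact absurd rfl hxy.ne
        · rfl
        · exact Sym2.eq_swap
        · exact absurd rfl hxy.ne
      exact henot (hEq ▸ hmem)
    · exact hee (by rw [Walk.edges_cons]; exact List.mem_cons_of_mem _ hq)
  · intro z hz
    rcases Sym2.mem_iff.mp hz with rfl | rfl
    · rcases hxs with rfl | hxq
      · exact ha
      · exact hqs _ hxq
    · rcases hys with rfl | hyq
      · exact ha
      · exact hqs _ hyq

end DCBAux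

/-- a bipartite graph is doubly chordal bipartite iff it is chordal
bipartite and has no induced subgraph isomorphic to the double-square graph. -/
theorem doublyChordalBipartite_iff (V : Type*) (G : SimpleGraph V) (hbip : G.Colorable 2) :
    DoublyChordalBipartite G ↔
      ChordalBipartite G ∧
        ¬ ∃ f : (Fin 3 ⊕ Fin 3) ↪ V,
            ∀ a b : Fin 3 ⊕ Fin 3, doubleSquareGraph.Adj a b ↔ G.Adj (f a) (f b) := by
  constructor
  · intro h
    constructor
    · intro v c hc hl
      obtain ⟨e₁, e₂, _, h1, _⟩ := h v c hc hl
      exact ⟨e₁, h1⟩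
    · rintro ⟨f, hf⟩
      have a1 : G.Adj (f (.inl 1)) (f (.inr 0)) := (hf _ _).mp (by decide)
      have a2 : G.Adj (f (.inr 0)) (f (.inl 0)) := (hf _ _).mp (by decide)
      have a3 : G.Adj (f (.inl 0)) (f (.inr 1)) := (hf _ _).mp (by decide)
      have a4 : G.Adj (f (.inr 1)) (f (.inl 2)) := (hf _ _).mp (by decide)
      have a5 : G.Adj (f (.inl 2)) (f (.inr 2)) := (hf _ _).mp (by decide)
      have a6 : G.Adj (f (.inr 2)) (f (.inl 1)) := (hf _ _).mp (by decide)
      let W : G.Walk (f (.inl 1)) (f (.inl 1)) :=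
        .cons a1 (.cons a2 (.cons a3 (.cons a4 (.cons a5 (.cons a6 .nil)))))
      have hWc : W.IsCycle := by
        rw [show W = SimpleGraph.Walk.cons a1 (.cons a2 (.cons a3 (.cons a4 (.cons a5
          (.cons a6 .nil))))) from rfl, SimpleGraph.Walk.cons_isCycle_iff]
        constructor
        · rw [SimpleGraph.Walk.isPath_def]
          simp [List.nodup_cons, f.injective.eq_iff]
        · simp [Sym2.eq_iff, f.injective.eq_iff]
      have hW6 : 6 ≤ W.length := by simp [W]
      obtain ⟨e₁, e₂, hne, hch1, hch2⟩ := h _ W hWc hW6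
      have claim : ∀ e', IsChord G W e' → e' = s(f (.inl 1), f (.inr 1)) := by
        intro e'
        induction e' using Sym2.ind with
        | _ x y =>
          rintro ⟨hG, hnot, hsup⟩
          have hadjxy : G.Adj x y := hG
          have hx := hsup x (by simp)
          have hy := hsup y (by simp)
          simp only [show W = SimpleGraph.Walk.cons a1 (.cons a2 (.cons a3 (.cons a4 (.cons a5
            (.cons a6 .nil))))) from rfl, SimpleGraph.Walk.support_cons,
            SimpleGraph.Walk.support_nil, List.mem_cons, List.mem_singleton,
            List.not_mem_nil, or_false] at hx hy
          obtain ⟨ux, rfl⟩ : ∃ u, x = f u := by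
            rcases hx with rfl | rfl | rfl | rfl | rfl | rfl | rfl <;> exact ⟨_, rfl⟩
          obtain ⟨uy, rfl⟩ : ∃ u, y = f u := by
            rcases hy with rfl | rfl | rfl | rfl | rfl | rfl | rfl <;> exact ⟨_, rfl⟩
          have hds : doubleSquareGraph.Adj ux uy := (hf _ _).mpr hadjxy
          have hWe : s(f ux, f uy) ∉ W.edges := hnot
          rw [show W = SimpleGraph.Walk.cons a1 (.cons a2 (.cons a3 (.cons a4 (.cons a5
            (.cons a6 .nil))))) from rfl] at hWe
          simp only [SimpleGraph.Walk.edges_cons, SimpleGraph.Walk.edges_nil, List.mem_cons,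
            List.not_mem_nil, or_false, not_or, Sym2.eq_iff, f.injective.eq_iff] at hWe
          rcases ux with i | i <;> rcases uy with j | j <;> fin_cases i <;> fin_cases j <;>
            first
              | exact absurd hds (by decide)
              | rfl
              | exact Sym2.eq_swap
              | (exfalso; revert hWe; decide)
      rw [claim e₁ hch1, claim e₂ hch2] at hne
      exact hne rfl
  · rintro ⟨hch, hds⟩ v c hc hl
    by_contra hno
    push_neg at hno
    obtain ⟨e, he⟩ := hch v c hc hl
    have hone : ∀ e', IsChord G c e' → e' = e := by
      intro e' h'
      by_contra hne
      exact hno e e' (fun h => hne h.symm) he h'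
    revert hone he
    induction e using Sym2.ind with
    | _ a b =>
    intro he hone
    have hadj : G.Adj a b := he.1
    have henot : s(a, b) ∉ c.edges := he.2.1
    have ha : a ∈ c.support := he.2.2 a (by simp)
    have hbc : b ∈ c.support := he.2.2 b (by simp)
    have hab : a ≠ b := hadj.ne
    set c' := c.rotate a ha with hc'def
    have hc' : c'.IsCycle := hc.rotate ha
    have hedgesperm : ∀ e', e' ∈ c'.edges ↔ e' ∈ c.edges := fun e' =>
      (SimpleGraph.Walk.rotate_edges c a ha).mem_iff
    have hsupc : ∀ x, x ∈ c'.support → x ∈ c.support := by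
      intro x hx
      rw [SimpleGraph.Walk.mem_support_iff] at hx
      rcases hx with rfl | hx
      · exact ha
      · exact List.mem_of_mem_tail ((SimpleGraph.Walk.support_rotate c a ha).mem_iff.mp hx)
    have hb' : b ∈ c'.support := by
      rw [SimpleGraph.Walk.mem_support_iff]
      right
      rw [(SimpleGraph.Walk.support_rotate c a ha).mem_iff]
      rw [SimpleGraph.Walk.mem_support_iff] at hbc
      rcases hbc with rfl | hbc
      · exact end_mem_tail_support_closed c (by omega)
      · exact hbc
    have hspec : (c'.takeUntil b hb').append (c'.dropUntil b hb') = c' :=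
      SimpleGraph.Walk.take_spec _ hb'
    set p := c'.takeUntil b hb' with hpdef
    set q := c'.dropUntil b hb' with hqdef
    have hsupp_eq : p.support ++ q.support.tail = c'.support := by
      rw [← hspec]; exact (SimpleGraph.Walk.support_append p q).symm
    have hedge_eq : ∀ e', e' ∈ c.edges ↔ (e' ∈ p.edges ∨ e' ∈ q.edges) := by
      intro e'
      rw [← hedgesperm, ← hspec, SimpleGraph.Walk.edges_append, List.mem_append]
    have hnd : (p.support.tail ++ q.support.tail).Nodup := by
      have h2 : c'.support.tail.Nodup := hc'.2
      rw [← hsupp_eq, SimpleGraph.Walk.support_eq_cons p, List.cons_append, List.tail_cons] at h2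
      exact h2
    obtain ⟨hnd1, hnd2, hdisj⟩ := List.nodup_append.mp hnd
    have hbp : b ∈ p.support := SimpleGraph.Walk.end_mem_support p
    have hbpt : b ∈ p.support.tail := by
      rw [SimpleGraph.Walk.mem_support_iff] at hbp
      rcases hbp with h' | h'
      · exact absurd h'.symm hab
      · exact h'
    have hat : a ∈ q.support.tail := SimpleGraph.Walk.end_mem_tail_support_of_ne (Ne.symm hab) q
    have hqpath : q.IsPath := by
      rw [SimpleGraph.Walk.isPath_def, SimpleGraph.Walk.support_eq_cons q, List.nodup_cons]
      exact ⟨fun hbq => hdisj _ hbpt _ hbq rfl, hnd2⟩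
    have hppath : p.IsPath := by
      rw [SimpleGraph.Walk.isPath_def, SimpleGraph.Walk.support_eq_cons p, List.nodup_cons]
      exact ⟨fun haq => hdisj _ haq _ hat rfl, hnd1⟩
    have hsabq : s(a, b) ∉ q.edges := fun h => henot ((hedge_eq _).mpr (Or.inr h))
    have hsabp : s(a, b) ∉ p.edges := fun h => henot ((hedge_eq _).mpr (Or.inl h))
    have hcyc1 : (SimpleGraph.Walk.cons hadj q).IsCycle :=
      (SimpleGraph.Walk.cons_isCycle_iff q hadj).mpr ⟨hqpath, hsabq⟩
    have hcyc2 : (SimpleGraph.Walk.cons hadj.symm p).IsCycle :=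
      (SimpleGraph.Walk.cons_isCycle_iff p hadj.symm).mpr
        ⟨hppath, by rw [Sym2.eq_swap]; exact hsabp⟩
    have hlen_eq : p.length + q.length = c.length := by
      have hl1 : c'.edges.length = c.edges.length :=
        (SimpleGraph.Walk.rotate_edges c a ha).perm.length_eq
      rw [SimpleGraph.Walk.length_edges, SimpleGraph.Walk.length_edges] at hl1
      have hl2 := congrArg SimpleGraph.Walk.length hspec
      rw [SimpleGraph.Walk.length_append] at hl2
      omega
    have hev1 : Even (q.length + 1) := by
      simpa using even_closed_walk hbip (SimpleGraph.Walk.cons hadj q)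
    have hev2 : Even (p.length + 1) := by
      simpa using even_closed_walk hbip (SimpleGraph.Walk.cons hadj.symm p)
    have h3a : 3 ≤ q.length + 1 := by simpa using hcyc1.three_le_length
    have h3b : 3 ≤ p.length + 1 := by simpa using hcyc2.three_le_length
    have hint := support_inter p q hnd
    have hqs : ∀ z ∈ q.support, z ∈ c.support := by
      intro z hz
      apply hsupc
      rw [← hsupp_eq, List.mem_append]
      rw [SimpleGraph.Walk.mem_support_iff] at hz
      rcases hz with rfl | hz
      · exact Or.inl hbp
      · exact Or.inr hz
    have hps : ∀ z ∈ p.support, z ∈ c.support := fun z hz =>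
      hsupc z (by rw [← hsupp_eq]; exact List.mem_append.mpr (Or.inl hz))
    by_cases hq6 : 5 ≤ q.length
    · obtain ⟨e₁, he₁⟩ := hch a (SimpleGraph.Walk.cons hadj q) hcyc1 (by simp; omega)
      revert he₁
      induction e₁ using Sym2.ind with
      | _ x y =>
      intro he₁
      obtain ⟨hchc, hne1⟩ := chord_of_subcycle hadj q p (fun e' h' => (hedge_eq e').mp h')
        hqs ha hint henot he₁
      exact hne1 (hone _ hchc)
    by_cases hp6 : 5 ≤ p.length
    · obtain ⟨e₁, he₁⟩ := hch b (SimpleGraph.Walk.cons hadj.symm p) hcyc2 (by simp; omega)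
      revert he₁
      induction e₁ using Sym2.ind with
      | _ x y =>
      intro he₁
      obtain ⟨hchc, hne1⟩ := chord_of_subcycle hadj.symm p q
        (fun e' h' => ((hedge_eq e').mp h').symm)
        hps hbc (fun z hz1 hz2 => (hint z hz2 hz1).symm)
        (by rw [Sym2.eq_swap]; exact henot) he₁
      refine hne1 ?_
      rw [hone _ hchc, Sym2.eq_swap]
    have hq3 : q.length = 3 := by
      obtain ⟨k, hk⟩ := hev1
      omega
    have hp3 : p.length = 3 := by
      obtain ⟨k, hk⟩ := hev2
      omega
    obtain ⟨x1, x2, h1, h2, h3, hpE⟩ := walk_len3 p hp3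
    obtain ⟨y1, y2, h4, h5, h6, hqE⟩ := walk_len3 q hq3
    have hpsup : p.support = [a, x1, x2, b] := by rw [hpE]; rfl
    have hqsup : q.support = [b, y1, y2, a] := by rw [hqE]; rfl
    have hpe : p.edges = [s(a, x1), s(x1, x2), s(x2, b)] := by rw [hpE]; rfl
    have hqe : q.edges = [s(b, y1), s(y1, y2), s(y2, a)] := by rw [hqE]; rfl
    have hnd6 : ([x1, x2, b] ++ [y1, y2, a] : List V).Nodup := by
      rw [hpsup, hqsup] at hnd
      exact hnd
    simp only [List.cons_append, List.nil_append, List.nodup_cons, List.mem_cons,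
      List.not_mem_nil, or_false, not_or, List.nodup_nil, and_true] at hnd6
    obtain ⟨⟨q12, q1b, q1u, q1v, q1a⟩, ⟨q2b, q2u, q2v, q2a⟩, ⟨qbu, qbv, qba⟩,
      ⟨quv, qua⟩, qva, -⟩ := hnd6
    have mx1 : x1 ∈ c.support := hps x1 (by rw [hpsup]; simp)
    have mx2 : x2 ∈ c.support := hps x2 (by rw [hpsup]; simp)
    have my1 : y1 ∈ c.support := hqs y1 (by rw [hqsup]; simp)
    have my2 : y2 ∈ c.support := hqs y2 (by rw [hqsup]; simp)
    have hno2 : ∀ z w, G.Adj z w → z ∈ c.support → w ∈ c.support →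
        s(z, w) ∈ p.edges ∨ s(z, w) ∈ q.edges ∨ s(z, w) = s(a, b) := by
      intro z w hzw hz hw
      by_cases hmem : s(z, w) ∈ c.edges
      · rcases (hedge_eq _).mp hmem with h | h
        · exact Or.inl h
        · exact Or.inr (Or.inl h)
      · refine Or.inr (Or.inr (hone _ ⟨hzw, hmem, ?_⟩))
        intro t ht
        rcases Sym2.mem_iff.mp ht with rfl | rfl <;> assumption
    have nA1 : ¬ G.Adj x2 a := by
      intro h'
      rcases hno2 _ _ h' mx2 ha with hm | hm | hm
      · rw [hpe] at hm
        simp only [List.mem_cons, List.not_mem_nil, or_false, Sym2.eq_iff, q12, Ne.symm q12, q1b, Ne.symm q1b, q1u, Ne.symm q1u, q1v, Ne.symm q1v, q1a, Ne.symm q1a, q2b, Ne.symm q2b, q2u, Ne.symm q2u, q2v, Ne.symm q2v, q2a, Ne.symm q2a, qbu, Ne.symm qbu, qbv, Ne.symm qbv, qba, Ne.symm qba, quv, Ne.symm quv, qua, Ne.symm qua, qva, Ne.symm qva,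
          and_false, false_and, and_true, true_and, or_self, or_false, false_or] at hm
      · rw [hqe] at hm
        simp only [List.mem_cons, List.not_mem_nil, or_false, Sym2.eq_iff, q12, Ne.symm q12, q1b, Ne.symm q1b, q1u, Ne.symm q1u, q1v, Ne.symm q1v, q1a, Ne.symm q1a, q2b, Ne.symm q2b, q2u, Ne.symm q2u, q2v, Ne.symm q2v, q2a, Ne.symm q2a, qbu, Ne.symm qbu, qbv, Ne.symm qbv, qba, Ne.symm qba, quv, Ne.symm quv, qua, Ne.symm qua, qva, Ne.symm qva,
          and_false, false_and, and_true, true_and, or_self, or_false, false_or] at hm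
      · simp only [Sym2.eq_iff, q12, Ne.symm q12, q1b, Ne.symm q1b, q1u, Ne.symm q1u, q1v, Ne.symm q1v, q1a, Ne.symm q1a, q2b, Ne.symm q2b, q2u, Ne.symm q2u, q2v, Ne.symm q2v, q2a, Ne.symm q2a, qbu, Ne.symm qbu, qbv, Ne.symm qbv, qba, Ne.symm qba, quv, Ne.symm quv, qua, Ne.symm qua, qva, Ne.symm qva, and_false, false_and, and_true, true_and, or_self,
          or_false, false_or] at hm
    have nA2 : ¬ G.Adj x2 y1 := by
      intro h'
      rcases hno2 _ _ h' mx2 my1 with hm | hm | hm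
      · rw [hpe] at hm
        simp only [List.mem_cons, List.not_mem_nil, or_false, Sym2.eq_iff, q12, Ne.symm q12, q1b, Ne.symm q1b, q1u, Ne.symm q1u, q1v, Ne.symm q1v, q1a, Ne.symm q1a, q2b, Ne.symm q2b, q2u, Ne.symm q2u, q2v, Ne.symm q2v, q2a, Ne.symm q2a, qbu, Ne.symm qbu, qbv, Ne.symm qbv, qba, Ne.symm qba, quv, Ne.symm quv, qua, Ne.symm qua, qva, Ne.symm qva,
          and_false, false_and, and_true, true_and, or_self, or_false, false_or] at hm
      · rw [hqe] at hm
        simp only [List.mem_cons, List.not_mem_nil, or_false, Sym2.eq_iff, q12, Ne.symm q12, q1b, Ne.symm q1b, q1u, Ne.symm q1u, q1v, Ne.symm q1v, q1a, Ne.symm q1a, q2b, Ne.symm q2b, q2u, Ne.symm q2u, q2v, Ne.symm q2v, q2a, Ne.symm q2a, qbu, Ne.symm qbu, qbv, Ne.symm qbv, qba, Ne.symm qba, quv, Ne.symm quv, qua, Ne.symm qua, qva, Ne.symm qva,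
          and_false, false_and, and_true, true_and, or_self, or_false, false_or] at hm
      · simp only [Sym2.eq_iff, q12, Ne.symm q12, q1b, Ne.symm q1b, q1u, Ne.symm q1u, q1v, Ne.symm q1v, q1a, Ne.symm q1a, q2b, Ne.symm q2b, q2u, Ne.symm q2u, q2v, Ne.symm q2v, q2a, Ne.symm q2a, qbu, Ne.symm qbu, qbv, Ne.symm qbv, qba, Ne.symm qba, quv, Ne.symm quv, qua, Ne.symm qua, qva, Ne.symm qva, and_false, false_and, and_true, true_and, or_self,
          or_false, false_or] at hm
    have nA3 : ¬ G.Adj a y1 := by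
      intro h'
      rcases hno2 _ _ h' ha my1 with hm | hm | hm
      · rw [hpe] at hm
        simp only [List.mem_cons, List.not_mem_nil, or_false, Sym2.eq_iff, q12, Ne.symm q12, q1b, Ne.symm q1b, q1u, Ne.symm q1u, q1v, Ne.symm q1v, q1a, Ne.symm q1a, q2b, Ne.symm q2b, q2u, Ne.symm q2u, q2v, Ne.symm q2v, q2a, Ne.symm q2a, qbu, Ne.symm qbu, qbv, Ne.symm qbv, qba, Ne.symm qba, quv, Ne.symm quv, qua, Ne.symm qua, qva, Ne.symm qva,
          and_false, false_and, and_true, true_and, or_self, or_false, false_or] at hm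
      · rw [hqe] at hm
        simp only [List.mem_cons, List.not_mem_nil, or_false, Sym2.eq_iff, q12, Ne.symm q12, q1b, Ne.symm q1b, q1u, Ne.symm q1u, q1v, Ne.symm q1v, q1a, Ne.symm q1a, q2b, Ne.symm q2b, q2u, Ne.symm q2u, q2v, Ne.symm q2v, q2a, Ne.symm q2a, qbu, Ne.symm qbu, qbv, Ne.symm qbv, qba, Ne.symm qba, quv, Ne.symm quv, qua, Ne.symm qua, qva, Ne.symm qva,
          and_false, false_and, and_true, true_and, or_self, or_false, false_or] at hm
      · simp only [Sym2.eq_iff, q12, Ne.symm q12, q1b, Ne.symm q1b, q1u, Ne.symm q1u, q1v, Ne.symm q1v, q1a, Ne.symm q1a, q2b, Ne.symm q2b, q2u, Ne.symm q2u, q2v, Ne.symm q2v, q2a, Ne.symm q2a, qbu, Ne.symm qbu, qbv, Ne.symm qbv, qba, Ne.symm qba, quv, Ne.symm quv, qua, Ne.symm qua, qva, Ne.symm qva, and_false, false_and, and_true, true_and, or_self,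
          or_false, false_or] at hm
    have nA4 : ¬ G.Adj x1 b := by
      intro h'
      rcases hno2 _ _ h' mx1 hbc with hm | hm | hm
      · rw [hpe] at hm
        simp only [List.mem_cons, List.not_mem_nil, or_false, Sym2.eq_iff, q12, Ne.symm q12, q1b, Ne.symm q1b, q1u, Ne.symm q1u, q1v, Ne.symm q1v, q1a, Ne.symm q1a, q2b, Ne.symm q2b, q2u, Ne.symm q2u, q2v, Ne.symm q2v, q2a, Ne.symm q2a, qbu, Ne.symm qbu, qbv, Ne.symm qbv, qba, Ne.symm qba, quv, Ne.symm quv, qua, Ne.symm qua, qva, Ne.symm qva,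
          and_false, false_and, and_true, true_and, or_self, or_false, false_or] at hm
      · rw [hqe] at hm
        simp only [List.mem_cons, List.not_mem_nil, or_false, Sym2.eq_iff, q12, Ne.symm q12, q1b, Ne.symm q1b, q1u, Ne.symm q1u, q1v, Ne.symm q1v, q1a, Ne.symm q1a, q2b, Ne.symm q2b, q2u, Ne.symm q2u, q2v, Ne.symm q2v, q2a, Ne.symm q2a, qbu, Ne.symm qbu, qbv, Ne.symm qbv, qba, Ne.symm qba, quv, Ne.symm quv, qua, Ne.symm qua, qva, Ne.symm qva,
          and_false, false_and, and_true, true_and, or_self, or_false, false_or] at hm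
      · simp only [Sym2.eq_iff, q12, Ne.symm q12, q1b, Ne.symm q1b, q1u, Ne.symm q1u, q1v, Ne.symm q1v, q1a, Ne.symm q1a, q2b, Ne.symm q2b, q2u, Ne.symm q2u, q2v, Ne.symm q2v, q2a, Ne.symm q2a, qbu, Ne.symm qbu, qbv, Ne.symm qbv, qba, Ne.symm qba, quv, Ne.symm quv, qua, Ne.symm qua, qva, Ne.symm qva, and_false, false_and, and_true, true_and, or_self,
          or_false, false_or] at hm
    have nA5 : ¬ G.Adj x1 y2 := by
      intro h'
      rcases hno2 _ _ h' mx1 my2 with hm | hm | hm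
      · rw [hpe] at hm
        simp only [List.mem_cons, List.not_mem_nil, or_false, Sym2.eq_iff, q12, Ne.symm q12, q1b, Ne.symm q1b, q1u, Ne.symm q1u, q1v, Ne.symm q1v, q1a, Ne.symm q1a, q2b, Ne.symm q2b, q2u, Ne.symm q2u, q2v, Ne.symm q2v, q2a, Ne.symm q2a, qbu, Ne.symm qbu, qbv, Ne.symm qbv, qba, Ne.symm qba, quv, Ne.symm quv, qua, Ne.symm qua, qva, Ne.symm qva,
          and_false, false_and, and_true, true_and, or_self, or_false, false_or] at hm
      · rw [hqe] at hm
        simp only [List.mem_cons, List.not_mem_nil, or_false, Sym2.eq_iff, q12, Ne.symm q12, q1b, Ne.symm q1b, q1u, Ne.symm q1u, q1v, Ne.symm q1v, q1a, Ne.symm q1a, q2b, Ne.symm q2b, q2u, Ne.symm q2u, q2v, Ne.symm q2v, q2a, Ne.symm q2a, qbu, Ne.symm qbu, qbv, Ne.symm qbv, qba, Ne.symm qba, quv, Ne.symm quv, qua, Ne.symm qua, qva, Ne.symm qva,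
          and_false, false_and, and_true, true_and, or_self, or_false, false_or] at hm
      · simp only [Sym2.eq_iff, q12, Ne.symm q12, q1b, Ne.symm q1b, q1u, Ne.symm q1u, q1v, Ne.symm q1v, q1a, Ne.symm q1a, q2b, Ne.symm q2b, q2u, Ne.symm q2u, q2v, Ne.symm q2v, q2a, Ne.symm q2a, qbu, Ne.symm qbu, qbv, Ne.symm qbv, qba, Ne.symm qba, quv, Ne.symm quv, qua, Ne.symm qua, qva, Ne.symm qva, and_false, false_and, and_true, true_and, or_self,
          or_false, false_or] at hm
    have nA6 : ¬ G.Adj b y2 := by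
      intro h'
      rcases hno2 _ _ h' hbc my2 with hm | hm | hm
      · rw [hpe] at hm
        simp only [List.mem_cons, List.not_mem_nil, or_false, Sym2.eq_iff, q12, Ne.symm q12, q1b, Ne.symm q1b, q1u, Ne.symm q1u, q1v, Ne.symm q1v, q1a, Ne.symm q1a, q2b, Ne.symm q2b, q2u, Ne.symm q2u, q2v, Ne.symm q2v, q2a, Ne.symm q2a, qbu, Ne.symm qbu, qbv, Ne.symm qbv, qba, Ne.symm qba, quv, Ne.symm quv, qua, Ne.symm qua, qva, Ne.symm qva,
          and_false, false_and, and_true, true_and, or_self, or_false, false_or] at hm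
      · rw [hqe] at hm
        simp only [List.mem_cons, List.not_mem_nil, or_false, Sym2.eq_iff, q12, Ne.symm q12, q1b, Ne.symm q1b, q1u, Ne.symm q1u, q1v, Ne.symm q1v, q1a, Ne.symm q1a, q2b, Ne.symm q2b, q2u, Ne.symm q2u, q2v, Ne.symm q2v, q2a, Ne.symm q2a, qbu, Ne.symm qbu, qbv, Ne.symm qbv, qba, Ne.symm qba, quv, Ne.symm quv, qua, Ne.symm qua, qva, Ne.symm qva,
          and_false, false_and, and_true, true_and, or_self, or_false, false_or] at hm
      · simp only [Sym2.eq_iff, q12, Ne.symm q12, q1b, Ne.symm q1b, q1u, Ne.symm q1u, q1v, Ne.symm q1v, q1a, Ne.symm q1a, q2b, Ne.symm q2b, q2u, Ne.symm q2u, q2v, Ne.symm q2v, q2a, Ne.symm q2a, qbu, Ne.symm qbu, qbv, Ne.symm qbv, qba, Ne.symm qba, quv, Ne.symm quv, qua, Ne.symm qua, qva, Ne.symm qva, and_false, false_and, and_true, true_and, or_self,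
          or_false, false_or] at hm
    have nA7 : ¬ G.Adj x2 y2 := by
      intro h'
      rcases hno2 _ _ h' mx2 my2 with hm | hm | hm
      · rw [hpe] at hm
        simp only [List.mem_cons, List.not_mem_nil, or_false, Sym2.eq_iff, q12, Ne.symm q12, q1b, Ne.symm q1b, q1u, Ne.symm q1u, q1v, Ne.symm q1v, q1a, Ne.symm q1a, q2b, Ne.symm q2b, q2u, Ne.symm q2u, q2v, Ne.symm q2v, q2a, Ne.symm q2a, qbu, Ne.symm qbu, qbv, Ne.symm qbv, qba, Ne.symm qba, quv, Ne.symm quv, qua, Ne.symm qua, qva, Ne.symm qva,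
          and_false, false_and, and_true, true_and, or_self, or_false, false_or] at hm
      · rw [hqe] at hm
        simp only [List.mem_cons, List.not_mem_nil, or_false, Sym2.eq_iff, q12, Ne.symm q12, q1b, Ne.symm q1b, q1u, Ne.symm q1u, q1v, Ne.symm q1v, q1a, Ne.symm q1a, q2b, Ne.symm q2b, q2u, Ne.symm q2u, q2v, Ne.symm q2v, q2a, Ne.symm q2a, qbu, Ne.symm qbu, qbv, Ne.symm qbv, qba, Ne.symm qba, quv, Ne.symm quv, qua, Ne.symm qua, qva, Ne.symm qva,
          and_false, false_and, and_true, true_and, or_self, or_false, false_or] at hm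
      · simp only [Sym2.eq_iff, q12, Ne.symm q12, q1b, Ne.symm q1b, q1u, Ne.symm q1u, q1v, Ne.symm q1v, q1a, Ne.symm q1a, q2b, Ne.symm q2b, q2u, Ne.symm q2u, q2v, Ne.symm q2v, q2a, Ne.symm q2a, qbu, Ne.symm qbu, qbv, Ne.symm qbv, qba, Ne.symm qba, quv, Ne.symm quv, qua, Ne.symm qua, qva, Ne.symm qva, and_false, false_and, and_true, true_and, or_self,
          or_false, false_or] at hm
    have nA8 : ¬ G.Adj y1 x1 := by
      intro h'
      rcases hno2 _ _ h' my1 mx1 with hm | hm | hm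
      · rw [hpe] at hm
        simp only [List.mem_cons, List.not_mem_nil, or_false, Sym2.eq_iff, q12, Ne.symm q12, q1b, Ne.symm q1b, q1u, Ne.symm q1u, q1v, Ne.symm q1v, q1a, Ne.symm q1a, q2b, Ne.symm q2b, q2u, Ne.symm q2u, q2v, Ne.symm q2v, q2a, Ne.symm q2a, qbu, Ne.symm qbu, qbv, Ne.symm qbv, qba, Ne.symm qba, quv, Ne.symm quv, qua, Ne.symm qua, qva, Ne.symm qva,
          and_false, false_and, and_true, true_and, or_self, or_false, false_or] at hm
      · rw [hqe] at hm
        simp only [List.mem_cons, List.not_mem_nil, or_false, Sym2.eq_iff, q12, Ne.symm q12, q1b, Ne.symm q1b, q1u, Ne.symm q1u, q1v, Ne.symm q1v, q1a, Ne.symm q1a, q2b, Ne.symm q2b, q2u, Ne.symm q2u, q2v, Ne.symm q2v, q2a, Ne.symm q2a, qbu, Ne.symm qbu, qbv, Ne.symm qbv, qba, Ne.symm qba, quv, Ne.symm quv, qua, Ne.symm qua, qva, Ne.symm qva,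
          and_false, false_and, and_true, true_and, or_self, or_false, false_or] at hm
      · simp only [Sym2.eq_iff, q12, Ne.symm q12, q1b, Ne.symm q1b, q1u, Ne.symm q1u, q1v, Ne.symm q1v, q1a, Ne.symm q1a, q2b, Ne.symm q2b, q2u, Ne.symm q2u, q2v, Ne.symm q2v, q2a, Ne.symm q2a, qbu, Ne.symm qbu, qbv, Ne.symm qbv, qba, Ne.symm qba, quv, Ne.symm quv, qua, Ne.symm qua, qva, Ne.symm qva, and_false, false_and, and_true, true_and, or_self,
          or_false, false_or] at hm
    have nA1' := fun h => nA1 (G.adj_symm h)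
    have nA2' := fun h => nA2 (G.adj_symm h)
    have nA3' := fun h => nA3 (G.adj_symm h)
    have nA4' := fun h => nA4 (G.adj_symm h)
    have nA5' := fun h => nA5 (G.adj_symm h)
    have nA6' := fun h => nA6 (G.adj_symm h)
    have nA7' := fun h => nA7 (G.adj_symm h)
    have nA8' := fun h => nA8 (G.adj_symm h)
    have h1' := h1.symm
    have h2' := h2.symm
    have h3' := h3.symm
    have h4' := h4.symm
    have h5' := h5.symm
    have h6' := h6.symm
    have hadj' := hadj.symm
    set F : Fin 3 ⊕ Fin 3 → V := Sum.elim ![x2, a, y1] ![x1, b, y2] with hF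
    have hFinj : Function.Injective F := by
      intro s t hst
      rcases s with i | i <;> rcases t with j | j <;> fin_cases i <;> fin_cases j <;>
        first
          | rfl
          | (simp only [hF] at hst; simp at hst; exact absurd hst (by first | assumption | exact Ne.symm (by assumption)))
    apply hds
    refine ⟨⟨F, hFinj⟩, ?_⟩
    intro s t
    show doubleSquareGraph.Adj s t ↔ G.Adj (F s) (F t)
    rcases s with i | i <;> rcases t with j | j <;> fin_cases i <;> fin_cases j <;>
      simp only [hF] <;> simp only [Sum.elim_inl, Sum.elim_inr] <;> norm_num <;>
      first
        | exact iff_of_true (by decide) (by assumption)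
        | exact iff_of_false (by decide) (by first | exact G.irrefl | assumption)
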